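/- For every real q ≥ 1/2, with s = (q+1)/2, t = q/2, w = √((2q−1)(q+1))/2 and h = 1 + q + s − 2w, one has h > 0 and s·(w − t)² − s²·h + h/4 < 0; consequently γ := (w − t)²·[s·(w − t)² − s²·h + h/4] ≤ 0, with γ < 0 whenever w ≠ t. -/
import Mathlib


/-- Section V.A: for every `q ≥ 1/2`, with `s = (q+1)/2`, `t = q/2`,
`w = √((2q−1)(q+1))/2` and `h = 1 + q + s − 2w`, one has `h > 0` and
`s(w−t)² − s²h + h/4 < 0`; hence `γ = (w−t)²[s(w−t)² − s²h + h/4] ≤ 0`, with `γ < 0`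
whenever `w ≠ t` (heterodyne detection is Charlie's optimal measurement). -/
theorem gamma_nonpos_of_channel (q : ℝ) (hq : 1/2 ≤ q) :
    let s := (q + 1) / 2
    let t := q / 2
    let w := Real.sqrt ((2*q - 1) * (q + 1)) / 2
    let h := 1 + q + s - 2*w
    0 < h ∧ s * (w - t) ^ 2 - s ^ 2 * h + h / 4 < 0 ∧
      (w - t) ^ 2 * (s * (w - t) ^ 2 - s ^ 2 * h + h / 4) ≤ 0 ∧
      (w ≠ t → (w - t) ^ 2 * (s * (w - t) ^ 2 - s ^ 2 * h + h / 4) < 0) := by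
  intro s t w h
  set u := Real.sqrt ((2*q - 1) * (q + 1)) with hudef
  have harg : (0:ℝ) ≤ (2*q - 1) * (q + 1) := by nlinarith
  have hu0 : 0 ≤ u := Real.sqrt_nonneg _
  have hu2 : u ^ 2 = (2*q - 1) * (q + 1) := Real.sq_sqrt harg
  have hupper : u < 3 * (q + 1) / 2 := by
    rw [hudef]
    rw [Real.sqrt_lt' (by nlinarith)]
    nlinarith
  have hh : 0 < h := by
    show (0:ℝ) < 1 + q + (q+1)/2 - 2 * (u/2)
    nlinarith
  have hkey : s * (w - t) ^ 2 - s ^ 2 * h + h / 4 < 0 := by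
    show (q+1)/2 * (u/2 - q/2) ^ 2 - ((q+1)/2) ^ 2 * (1 + q + (q+1)/2 - 2*(u/2))
        + (1 + q + (q+1)/2 - 2*(u/2)) / 4 < 0
    nlinarith [sq_nonneg ((q+1)*(5*q+1) - 2*q*u), hu2, hu0, sq_nonneg u, sq_nonneg (q+1),
      mul_nonneg hu0 (le_of_lt (by nlinarith : (0:ℝ) < q))]
  refine ⟨hh, hkey, mul_nonpos_of_nonneg_of_nonpos (sq_nonneg _) hkey.le, fun hne => ?_⟩
  have hwt : w - t ≠ 0 := sub_ne_zero.mpr hne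
  exact mul_neg_of_pos_of_neg (by positivity) hkey
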